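/- Let π : G̃ → G be a double cover of weighted graphs and let x be a dilated vertex of G, with unique preimage x̃ and with dval(x) denoting the valence of x in the dilation subgraph G_dil. Then g(x̃) = 2g(x) − 1 + dval(x)/2; in particular dval(x) is even, and if dval(x) = 0 then g(x) ≥ 1. Consequently, every connected component of G_dil is semistable, and in particular has genus at least 1. -/

import Mathlib

open scoped Classical

structure HGraph where
  V : Type
  H : Type
  [fintV : Fintype V]
  [fintH : Fintype H]
  [decV : DecidableEq V]
  [decH : DecidableEq H]
  root : H → V
  inv : H → H
  inv_inv : ∀ h, inv (inv h) = h
  inv_ne : ∀ h, inv h ≠ h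

attribute [instance] HGraph.fintV HGraph.fintH HGraph.decV HGraph.decH

namespace HGraph

variable (G : HGraph)

/-- The setoid on half-edges whose classes are the edges. -/
def edgeSetoid : Setoid G.H where
  r h h' := h' = h ∨ h' = G.inv h
  iseqv := by
    refine ⟨fun h => Or.inl rfl, ?_, ?_⟩
    · rintro a b (rfl | rfl)
      · exact Or.inl rfl
      · exact Or.inr (G.inv_inv a).symm
    · rintro a b c (rfl | rfl) hbc
      · exact hbc
      · rcases hbc with rfl | rfl
        · exact Or.inr rfl
        · exact Or.inl (G.inv_inv a)

instance edgeDec : DecidableRel G.edgeSetoid.r := fun _ _ => instDecidableOr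

/-- The edges of a graph: orbits of the involution on half-edges. -/
def Edge := Quotient G.edgeSetoid

instance : Fintype G.Edge := @Quotient.fintype _ _ G.edgeSetoid G.edgeDec
instance : DecidableEq G.Edge := @Quotient.decidableEq _ G.edgeSetoid G.edgeDec

/-- The edge underlying a half-edge. -/
def edge (h : G.H) : G.Edge := Quotient.mk G.edgeSetoid h

lemma edge_inv (h : G.H) : G.edge (G.inv h) = G.edge h :=
  Quotient.sound (Or.inr (G.inv_inv h).symm)

/-- The valence of a vertex: the number of half-edges rooted at it. -/
def val (v : G.V) : ℕ := (Finset.univ.filter fun h => G.root h = v).card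

/-- Two vertices are adjacent through an edge belonging to `S`. -/
def adjOn (S : Finset G.Edge) (v w : G.V) : Prop :=
  ∃ h, G.edge h ∈ S ∧ G.root h = v ∧ G.root (G.inv h) = w

/-- The spanning subgraph with edge set `S` is connected. -/
def ConnectedOn (S : Finset G.Edge) : Prop :=
  ∀ v w : G.V, Relation.ReflTransGen (G.adjOn S) v w

/-- The graph is connected. -/
def Connected : Prop := Nonempty G.V ∧ G.ConnectedOn Finset.univ

/-- Euler characteristic of a vertex, for a genus function `gV`. -/
def chiZ (gV : G.V → ℤ) (v : G.V) : ℤ := 2 - 2 * gV v - G.val v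

/-- The genus of a (connected) weighted graph. -/
def genusZ (gV : G.V → ℤ) : ℤ :=
  (Fintype.card G.Edge : ℤ) - Fintype.card G.V + 1 + ∑ v, gV v

/-- The number of connected components of the spanning subgraph with edge set `S`. -/
noncomputable def ncomp (S : Finset G.Edge) : ℕ :=
  Nat.card (Quotient (Relation.EqvGen.setoid (G.adjOn S)))

end HGraph

/-- A harmonic morphism of graphs: a graph morphism together with local degrees. -/
structure HarmonicTo (Gt G : HGraph) where
  fV : Gt.V → G.V
  fH : Gt.H → G.H
  root_comm : ∀ h, G.root (fH h) = fV (Gt.root h)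
  inv_comm : ∀ h, fH (Gt.inv h) = G.inv (fH h)
  dV : Gt.V → ℕ
  dH : Gt.H → ℕ
  dV_pos : ∀ v, 0 < dV v
  dH_pos : ∀ h, 0 < dH h
  dH_inv : ∀ h, dH (Gt.inv h) = dH h
  harm : ∀ (w : Gt.V) (h : G.H), G.root h = fV w →
    dV w = ∑ x ∈ Finset.univ.filter (fun x => Gt.root x = w ∧ fH x = h), dH x

namespace HarmonicTo

variable {Gt G : HGraph} (f : HarmonicTo Gt G)

/-- The induced map on edges. -/
def fE : Gt.Edge → G.Edge :=
  Quotient.lift (fun h => G.edge (f.fH h)) (by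
    rintro a b (rfl | rfl)
    · rfl
    · show G.edge (f.fH a) = G.edge (f.fH (Gt.inv a))
      rw [f.inv_comm]
      exact (G.edge_inv _).symm)

/-- The local degree of an edge. -/
def dE : Gt.Edge → ℕ :=
  Quotient.lift f.dH (by
    rintro a b (rfl | rfl)
    · rfl
    · exact (f.dH_inv a).symm)

/-- The ramification degree at a vertex of the source. -/
def Ram (gVt : Gt.V → ℤ) (gV : G.V → ℤ) (w : Gt.V) : ℤ :=
  (f.dV w : ℤ) * G.chiZ gV (f.fV w) - Gt.chiZ gVt w

end HarmonicTo

namespace HarmonicTo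

variable {Gt G : HGraph} (f : HarmonicTo Gt G)

/-- A vertex of the target of a double cover is dilated if it has a unique preimage. -/
def DilV (x : G.V) : Prop := Nat.card {w : Gt.V // f.fV w = x} = 1

/-- An edge of the target of a double cover is dilated if it has a unique preimage. -/
def DilE (e : G.Edge) : Prop := Nat.card {a : Gt.Edge // f.fE a = e} = 1

/-- Adjacency through a dilated edge. -/
def dilAdj (v w : G.V) : Prop :=
  ∃ h, f.DilE (G.edge h) ∧ G.root h = v ∧ G.root (G.inv h) = w

/-- Reachability inside the dilation subgraph. -/
def dilReach (v w : G.V) : Prop := Relation.ReflTransGen f.dilAdj v w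

/-- The valence of a vertex inside the dilation subgraph. -/
noncomputable def dval (x : G.V) : ℕ :=
  Nat.card {h : G.H // G.root h = x ∧ f.DilE (G.edge h)}

/-- The genus of the connected component of the dilation subgraph containing `y`. -/
noncomputable def dilCompGenus (gV : G.V → ℕ) (y : G.V) : ℤ :=
  (Nat.card {e : G.Edge // f.DilE e ∧ f.dilReach y (G.root (Quotient.out e))} : ℤ)
    - Nat.card {z : G.V // f.dilReach y z} + 1
    + ∑ᶠ (z : G.V) (_ : f.dilReach y z), (gV z : ℤ)

/-- The first Betti number of the connected component of the dilation subgraph containing `y`. -/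
noncomputable def dilCompB1 (y : G.V) : ℤ :=
  (Nat.card {e : G.Edge // f.DilE e ∧ f.dilReach y (G.root (Quotient.out e))} : ℤ)
    - Nat.card {z : G.V // f.dilReach y z} + 1

end HarmonicTo


namespace HarmonicTo

variable {Gt G : HGraph} (f : HarmonicTo Gt G)

lemma natCard_filter {α : Type} [Fintype α] (p : α → Prop) [DecidablePred p] :
    Nat.card {a // p a} = (Finset.univ.filter p).card := by
  classical
  rw [Nat.card_eq_fintype_card]
  convert Fintype.card_subtype p using 2

/-- The preimages of the edge of `h` are in bijection with the preimages of `h`. -/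
lemma card_fE_fiber (h : G.H) :
    (Finset.univ.filter fun a : Gt.Edge => f.fE a = G.edge h).card
      = (Finset.univ.filter fun a : Gt.H => f.fH a = h).card := by
  refine (Finset.card_bij (fun a _ => Gt.edge a) ?_ ?_ ?_).symm
  · intro a ha
    simp only [Finset.mem_filter, Finset.mem_univ, true_and] at ha ⊢
    show G.edge (f.fH a) = G.edge h
    rw [ha]
  · intro a ha b hb hab
    simp only [Finset.mem_filter, Finset.mem_univ, true_and] at ha hb
    rcases Quotient.exact hab with h1 | h1
    · exact h1.symm
    · exfalso
      rw [h1, f.inv_comm, ha] at hb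
      exact G.inv_ne h hb
  · intro q hq
    simp only [Finset.mem_filter, Finset.mem_univ, true_and] at hq
    have hout : Gt.edge (Quotient.out q) = q := Quotient.out_eq q
    have hq' : G.edge (f.fH (Quotient.out q)) = G.edge h := by
      have h2 : f.fE (Gt.edge (Quotient.out q)) = G.edge (f.fH (Quotient.out q)) := rfl
      rw [hout] at h2
      rw [← h2]
      exact hq
    rcases Quotient.exact hq' with h1 | h1
    · exact ⟨Quotient.out q, by simp [h1.symm], hout⟩
    · refine ⟨Gt.inv (Quotient.out q), by simp [f.inv_comm, h1.symm], ?_⟩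
      show Gt.edge (Gt.inv (Quotient.out q)) = q
      rw [Gt.edge_inv]
      exact hout

lemma dilE_iff' (h : G.H) :
    f.DilE (G.edge h) ↔ (Finset.univ.filter fun a : Gt.H => f.fH a = h).card = 1 := by
  unfold DilE
  rw [natCard_filter]
  rw [f.card_fE_fiber h]

lemma exists_preimage (w : Gt.V) (h : G.H) (hh : G.root h = f.fV w) :
    ∃ a, Gt.root a = w ∧ f.fH a = h := by
  have hs := f.harm w h hh
  by_contra hc
  push_neg at hc
  have he : (Finset.univ.filter fun a => Gt.root a = w ∧ f.fH a = h) = ∅ := by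
    ext a
    simp only [Finset.mem_filter, Finset.mem_univ, true_and, Finset.notMem_empty, iff_false,
      not_and]
    exact hc a
  rw [he, Finset.sum_empty] at hs
  exact (f.dV_pos w).ne' hs

/-- Endpoints of dilated edges are dilated vertices. -/
lemma dilV_of_dilE
    (hdeg2 : ∀ v : G.V, ∑ w ∈ Finset.univ.filter (fun w => f.fV w = v), f.dV w = 2)
    (h : G.H) (hd : f.DilE (G.edge h)) : f.DilV (G.root h) := by
  have hcard := (f.dilE_iff' h).mp hd
  unfold DilV
  rw [natCard_filter]
  have hne : (Finset.univ.filter fun w : Gt.V => f.fV w = G.root h).Nonempty := by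
    rcases Finset.eq_empty_or_nonempty (Finset.univ.filter fun w : Gt.V => f.fV w = G.root h)
      with he | hne
    · exfalso
      have h2 := hdeg2 (G.root h)
      rw [he, Finset.sum_empty] at h2
      omega
    · exact hne
  have hle : (Finset.univ.filter fun w : Gt.V => f.fV w = G.root h).card ≤ 1 := by
    by_contra hcon
    push_neg at hcon
    obtain ⟨w1, hw1, w2, hw2, hww⟩ := Finset.one_lt_card.mp hcon
    simp only [Finset.mem_filter, Finset.mem_univ, true_and] at hw1 hw2
    obtain ⟨a1, ha1, ha1'⟩ := f.exists_preimage w1 h hw1.symm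
    obtain ⟨a2, ha2, ha2'⟩ := f.exists_preimage w2 h hw2.symm
    have hgt : (1 : ℕ) < (Finset.univ.filter fun a : Gt.H => f.fH a = h).card := by
      refine Finset.one_lt_card.mpr ⟨a1, by simp [ha1'], a2, by simp [ha2'], ?_⟩
      rintro rfl
      exact hww (ha1 ▸ ha2)
    omega
  have hpos := hne.card_pos
  omega

/-- The key computation at a dilated vertex. -/
lemma key_genus (gVt : Gt.V → ℕ) (gV : G.V → ℕ)
    (hunram : ∀ w : Gt.V, f.Ram (fun u => (gVt u : ℤ)) (fun u => (gV u : ℤ)) w = 0)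
    (hdeg2 : ∀ v : G.V, ∑ w ∈ Finset.univ.filter (fun w => f.fV w = v), f.dV w = 2)
    (x : G.V) (xt : Gt.V) (hxt : f.fV xt = x) (huniq : ∀ w : Gt.V, f.fV w = x → w = xt) :
    ∃ k : ℕ, f.dval x = 2 * k ∧ (gVt xt : ℤ) = 2 * (gV x : ℤ) - 1 + k := by
  classical
  have hdV : f.dV xt = 2 := by
    have h2 := hdeg2 x
    rw [show (Finset.univ.filter fun w => f.fV w = x) = {xt} by
      ext w
      simp only [Finset.mem_filter, Finset.mem_univ, true_and, Finset.mem_singleton]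
      exact ⟨fun hw => huniq w hw, fun hw => hw ▸ hxt⟩, Finset.sum_singleton] at h2
    exact h2
  set A : Finset G.H := Finset.univ.filter (fun h => G.root h = x) with hA
  have hfib : ∀ h ∈ A, (Finset.univ.filter fun a : Gt.H => Gt.root a = xt ∧ f.fH a = h)
      = Finset.univ.filter fun a : Gt.H => f.fH a = h := by
    intro h hh
    rw [hA, Finset.mem_filter] at hh
    ext a
    simp only [Finset.mem_filter, Finset.mem_univ, true_and, and_iff_right_iff_imp]
    intro ha
    apply huniq
    rw [← f.root_comm, ha, hh.2]
  have hsum2 : ∀ h ∈ A, ∑ a ∈ Finset.univ.filter (fun a : Gt.H => f.fH a = h), f.dH a = 2 := by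
    intro h hh
    have hh' : G.root h = f.fV xt := by
      rw [hA, Finset.mem_filter] at hh
      rw [hh.2, hxt]
    have hharm := f.harm xt h hh'
    rw [hfib h hh] at hharm
    rw [← hharm]
    exact hdV
  have hc2 : ∀ h ∈ A, (Finset.univ.filter fun a : Gt.H => f.fH a = h).card
      + (if f.DilE (G.edge h) then 1 else 0) = 2 := by
    intro h hh
    have hs := hsum2 h hh
    have hle : (Finset.univ.filter fun a : Gt.H => f.fH a = h).card ≤ 2 := by
      have h1 := Finset.card_nsmul_le_sum (Finset.univ.filter fun a : Gt.H => f.fH a = h)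
        f.dH 1 (fun a _ => f.dH_pos a)
      rw [smul_eq_mul, mul_one, hs] at h1
      exact h1
    have hpos : 0 < (Finset.univ.filter fun a : Gt.H => f.fH a = h).card := by
      rcases Finset.eq_empty_or_nonempty (Finset.univ.filter fun a : Gt.H => f.fH a = h)
        with he | hne
      · rw [he, Finset.sum_empty] at hs
        omega
      · exact hne.card_pos
    have hiff := f.dilE_iff' h
    by_cases hd : f.DilE (G.edge h)
    · simp only [hd, if_true]
      rw [hiff.mp hd]
    · simp only [hd, if_false, Nat.add_zero]
      have hne1 : (Finset.univ.filter fun a : Gt.H => f.fH a = h).card ≠ 1 :=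
        fun hcc => hd (hiff.mpr hcc)
      omega
  have hval : Gt.val xt + f.dval x = 2 * G.val x := by
    have hfw : (Finset.univ.filter fun a : Gt.H => Gt.root a = xt).card
        = ∑ h ∈ A, ((Finset.univ.filter fun a : Gt.H => Gt.root a = xt).filter
            fun a => f.fH a = h).card := by
      refine Finset.card_eq_sum_card_fiberwise ?_
      intro a ha
      rw [Finset.mem_coe, Finset.mem_filter] at ha
      rw [hA, Finset.mem_coe, Finset.mem_filter]
      refine ⟨Finset.mem_univ _, ?_⟩
      rw [f.root_comm, ha.2, hxt]
    have hvxt : Gt.val xt = ∑ h ∈ A, (Finset.univ.filter fun a : Gt.H => f.fH a = h).card := by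
      rw [HGraph.val, hfw]
      refine Finset.sum_congr rfl fun h hh => ?_
      rw [Finset.filter_filter]
      exact congrArg Finset.card (hfib h hh)
    have hdvx : f.dval x = ∑ h ∈ A, (if f.DilE (G.edge h) then 1 else 0) := by
      rw [dval, natCard_filter, ← Finset.card_filter]
      congr 1
      rw [hA, Finset.filter_filter]
    calc Gt.val xt + f.dval x
        = ∑ h ∈ A, ((Finset.univ.filter fun a : Gt.H => f.fH a = h).card
            + if f.DilE (G.edge h) then 1 else 0) := by
          rw [hvxt, hdvx, Finset.sum_add_distrib]
      _ = ∑ _h ∈ A, 2 := Finset.sum_congr rfl hc2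
      _ = 2 * G.val x := by
          rw [Finset.sum_const, smul_eq_mul, HGraph.val, ← hA, mul_comm]
  have hu := hunram xt
  rw [Ram, hxt] at hu
  rw [HGraph.chiZ, HGraph.chiZ, hdV] at hu
  push_cast at hu
  refine ⟨f.dval x / 2, ?_, ?_⟩ <;> omega

end HarmonicTo

/-- Let `π : G̃ → G` be a double cover and `x` a dilated vertex with unique
preimage `x̃`. Then `g(x̃) = 2g(x) − 1 + dval(x)/2`; in particular `dval(x)` is even, and if
`dval(x) = 0` then `g(x) ≥ 1`. Consequently every connected component of the dilation subgraph
is semistable, and in particular has genus at least 1. -/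
theorem dilated_vertex_genus (Gt G : HGraph) (gVt : Gt.V → ℕ) (gV : G.V → ℕ)
    (f : HarmonicTo Gt G) (hconnt : Gt.Connected) (hconn : G.Connected)
    (hunram : ∀ w : Gt.V, f.Ram (fun u => (gVt u : ℤ)) (fun u => (gV u : ℤ)) w = 0)
    (hdeg2 : ∀ v : G.V, ∑ w ∈ Finset.univ.filter (fun w => f.fV w = v), f.dV w = 2)
    (x : G.V) (xt : Gt.V) (hxt : f.fV xt = x) (huniq : ∀ w : Gt.V, f.fV w = x → w = xt) :
    (∃ k : ℕ, f.dval x = 2 * k ∧ (gVt xt : ℤ) = 2 * (gV x : ℤ) - 1 + k) ∧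
    (f.dval x = 0 → 1 ≤ gV x) ∧
    (∀ y : G.V, f.DilV y → (2 : ℤ) - 2 * (gV y : ℤ) - f.dval y ≤ 0) ∧
    (∀ y : G.V, f.DilV y → 1 ≤ f.dilCompGenus gV y) := by
  classical
  -- helper: extract the unique preimage from `DilV`
  have hup : ∀ y : G.V, f.DilV y → ∃ yt : Gt.V, f.fV yt = y ∧ ∀ w, f.fV w = y → w = yt := by
    intro y hy
    rw [HarmonicTo.DilV, HarmonicTo.natCard_filter, Finset.card_eq_one] at hy
    obtain ⟨yt, hyt⟩ := hy
    have hm : ∀ w : Gt.V, f.fV w = y ↔ w = yt := by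
      intro w
      constructor
      · intro hw
        have hmem : w ∈ Finset.univ.filter fun w : Gt.V => f.fV w = y := by simp [hw]
        rw [hyt, Finset.mem_singleton] at hmem
        exact hmem
      · intro hw
        rw [hw]
        have hmem : yt ∈ Finset.univ.filter fun w : Gt.V => f.fV w = y := by
          rw [hyt]
          exact Finset.mem_singleton_self _
        simpa using hmem
    exact ⟨yt, (hm yt).mpr rfl, fun w hw => (hm w).mp hw⟩
  have part1 := f.key_genus gVt gV hunram hdeg2 x xt hxt huniq
  have part3 : ∀ y : G.V, f.DilV y → (2 : ℤ) - 2 * (gV y : ℤ) - f.dval y ≤ 0 := by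
    intro y hy
    obtain ⟨yt, hyt, hyu⟩ := hup y hy
    obtain ⟨k, hk1, hk2⟩ := f.key_genus gVt gV hunram hdeg2 y yt hyt hyu
    omega
  refine ⟨part1, ?_, part3, ?_⟩
  · intro hdz
    obtain ⟨k, hk1, hk2⟩ := part1
    omega
  · intro y hy
    -- connected component of the dilation subgraph containing y
    set C : Finset G.V := Finset.univ.filter (fun z => f.dilReach y z) with hC
    set Es : Finset G.Edge := Finset.univ.filter
      (fun e : G.Edge => f.DilE e ∧ f.dilReach y (G.root (Quotient.out e))) with hEs
    set Hs : Finset G.H := Finset.univ.filter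
      (fun h : G.H => f.dilReach y (G.root h) ∧ f.DilE (G.edge h)) with hHs
    -- every vertex in the component is dilated
    have hreach_dil : ∀ z : G.V, f.dilReach y z → f.DilV z := by
      intro z hz
      induction hz with
      | refl => exact hy
      | tail _ had _ =>
        obtain ⟨h, hdil, hv, hw⟩ := had
        have hd2 : f.DilE (G.edge (G.inv h)) := by rwa [G.edge_inv]
        have := f.dilV_of_dilE hdeg2 (G.inv h) hd2
        rwa [hw] at this
    -- sum of dilation valences over the component
    have hHsum : ∑ z ∈ C, f.dval z = Hs.card := by
      have hfw : Hs.card = ∑ z ∈ C, (Hs.filter fun h => G.root h = z).card := by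
        refine Finset.card_eq_sum_card_fiberwise ?_
        intro h hh
        rw [hHs, Finset.mem_coe, Finset.mem_filter] at hh
        rw [hC, Finset.mem_coe, Finset.mem_filter]
        exact ⟨Finset.mem_univ _, hh.2.1⟩
      rw [hfw]
      refine Finset.sum_congr rfl fun z hz => ?_
      rw [hC, Finset.mem_filter] at hz
      rw [HarmonicTo.dval, HarmonicTo.natCard_filter]
      congr 1
      rw [hHs, Finset.filter_filter]
      ext h
      simp only [Finset.mem_filter, Finset.mem_univ, true_and]
      constructor
      · rintro ⟨hr, hd⟩
        exact ⟨⟨by rw [hr]; exact hz.2, hd⟩, hr⟩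
      · rintro ⟨⟨_, hd⟩, hr⟩
        exact ⟨hr, hd⟩
    -- each dilated edge in the component has exactly two half-edges in the component
    have hH2E : Hs.card = 2 * Es.card := by
      have hfw : Hs.card = ∑ e ∈ Es, (Hs.filter fun h => G.edge h = e).card := by
        refine Finset.card_eq_sum_card_fiberwise ?_
        intro h hh
        rw [hHs, Finset.mem_coe, Finset.mem_filter] at hh
        rw [hEs, Finset.mem_coe, Finset.mem_filter]
        refine ⟨Finset.mem_univ _, hh.2.2, ?_⟩
        have hout : G.edge (Quotient.out (G.edge h)) = G.edge h := Quotient.out_eq _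
        rcases Quotient.exact hout with h1 | h1
        · rw [← h1]
          exact hh.2.1
        · have h2 : Quotient.out (G.edge h) = G.inv h := by
            conv_rhs => rw [h1, G.inv_inv]
          rw [h2]
          exact hh.2.1.tail ⟨h, hh.2.2, rfl, rfl⟩
      have hfib2 : ∀ e ∈ Es, (Hs.filter fun h => G.edge h = e).card = 2 := by
        intro e he
        rw [hEs, Finset.mem_filter] at he
        obtain ⟨_, hdil, hre⟩ := he
        have houte : G.edge (Quotient.out e) = e := Quotient.out_eq e
        have hdout : f.DilE (G.edge (Quotient.out e)) := by rwa [houte]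
        have hmem1 : Quotient.out e ∈ Hs.filter fun h => G.edge h = e := by
          rw [Finset.mem_filter, hHs, Finset.mem_filter]
          exact ⟨⟨Finset.mem_univ _, hre, hdout⟩, houte⟩
        have hmem2 : G.inv (Quotient.out e) ∈ Hs.filter fun h => G.edge h = e := by
          rw [Finset.mem_filter, hHs, Finset.mem_filter]
          refine ⟨⟨Finset.mem_univ _, ?_, by rwa [G.edge_inv]⟩, by rw [G.edge_inv]; exact houte⟩
          exact hre.tail ⟨Quotient.out e, hdout, rfl, rfl⟩
        have hset : (Hs.filter fun h => G.edge h = e)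
            = {Quotient.out e, G.inv (Quotient.out e)} := by
          ext h
          simp only [Finset.mem_insert, Finset.mem_singleton]
          constructor
          · intro hh
            rw [Finset.mem_filter] at hh
            have hhe : G.edge h = G.edge (Quotient.out e) := by rw [hh.2, houte]
            rcases Quotient.exact hhe with h1 | h1
            · exact Or.inl h1.symm
            · right
              rw [h1, G.inv_inv]
          · rintro (rfl | rfl)
            · exact hmem1
            · exact hmem2
        rw [hset]
        exact Finset.card_pair (fun hcc => G.inv_ne (Quotient.out e) hcc.symm)
      rw [hfw, Finset.sum_congr rfl hfib2, Finset.sum_const, smul_eq_mul, mul_comm]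
    -- semistability summed over the component
    have hss : ∑ z ∈ C, ((2 : ℤ) - 2 * (gV z : ℤ) - f.dval z) ≤ 0 := by
      refine Finset.sum_nonpos fun z hz => ?_
      rw [hC, Finset.mem_filter] at hz
      exact part3 z (hreach_dil z hz.2)
    have hexp : ∑ z ∈ C, ((2 : ℤ) - 2 * (gV z : ℤ) - f.dval z)
        = 2 * (C.card : ℤ) - 2 * (∑ z ∈ C, (gV z : ℤ)) - 2 * (Es.card : ℤ) := by
      rw [Finset.sum_sub_distrib, Finset.sum_sub_distrib, Finset.sum_const, ← Finset.mul_sum]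
      have hcast : ∑ z ∈ C, (f.dval z : ℤ) = ((∑ z ∈ C, f.dval z : ℕ) : ℤ) := by
        push_cast
        rfl
      rw [hcast, hHsum, hH2E]
      push_cast
      ring
    -- rewrite the component genus
    have hgen : f.dilCompGenus gV y
        = (Es.card : ℤ) - (C.card : ℤ) + 1 + ∑ z ∈ C, (gV z : ℤ) := by
      rw [HarmonicTo.dilCompGenus, HarmonicTo.natCard_filter, HarmonicTo.natCard_filter]
      have hfin : ∑ᶠ (z : G.V) (_ : f.dilReach y z), (gV z : ℤ) = ∑ z ∈ C, (gV z : ℤ) := by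
        refine finsum_cond_eq_sum_of_cond_iff _ ?_
        intro z _
        rw [hC, Finset.mem_filter]
        exact ⟨fun h => ⟨Finset.mem_univ _, h⟩, fun h => h.2⟩
      rw [hfin, hC, hEs]
    rw [hgen]
    rw [hexp] at hss
    linarith
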